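/- In Myerson's three-person game, no strict convex combination of the degenerate distributions δ_{(y_1,y_2,y_3)} and δ_{(z_1,z_2,y_3)} is correlated perfect; hence the set of correlated perfect equilibria is not convex. -/

import Mathlib

open Finset Filter Topology

/-- Strategy profiles: player 1 and 2 choose in `Fin 3` (0 = x, 1 = y, 2 = z),
player 3 chooses in `Fin 2` (0 = x₃, 1 = y₃). -/
abbrev Prof : Type := Fin 3 × Fin 3 × Fin 2

/-- Player 1's payoff in Myerson's three-person game. -/
noncomputable def u1 : Prof → ℝ :=
  fun p => if p.2.2 = 1 then 3 else !![1, 2, 2; 0, 3, 0; 0, 0, 3] p.1 p.2.1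

/-- Player 2's payoff. -/
noncomputable def u2 : Prof → ℝ :=
  fun p => if p.2.2 = 1 then 3 else !![1, 0, 0; 2, 0, 3; 2, 3, 0] p.1 p.2.1

/-- Player 3's payoff. -/
noncomputable def u3 : Prof → ℝ :=
  fun p => if p.2.2 = 1 then 1 else if p.1 = 0 ∧ p.2.1 = 0 then 2 else 0

def IsDist3 (ρ : Prof → ℝ) : Prop := (∀ p, 0 ≤ ρ p) ∧ ∑ p, ρ p = 1

def Mixed3 (ρ : Prof → ℝ) : Prop := ∀ p, 0 < ρ p

def marg1 (ρ : Prof → ℝ) (a : Fin 3) : ℝ := ∑ b : Fin 3, ∑ c : Fin 2, ρ (a, b, c)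
def marg2 (ρ : Prof → ℝ) (b : Fin 3) : ℝ := ∑ a : Fin 3, ∑ c : Fin 2, ρ (a, b, c)
def marg3 (ρ : Prof → ℝ) (c : Fin 2) : ℝ := ∑ a : Fin 3, ∑ b : Fin 3, ρ (a, b, c)

/-- Correlated perfect equilibrium of Myerson's game: a completely mixed sequence
converging to `ρ` along which every recommendation in the support stays optimal. -/
def IsCPE3 (ρ : Prof → ℝ) : Prop :=
  IsDist3 ρ ∧ ∃ ρk : ℕ → Prof → ℝ,
    (∀ k, IsDist3 (ρk k) ∧ Mixed3 (ρk k)) ∧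
    (∀ p, Tendsto (fun k => ρk k p) atTop (𝓝 (ρ p))) ∧
    (∀ k a, 0 < marg1 ρ a → ∀ a',
      ∑ b : Fin 3, ∑ c : Fin 2, ρk k (a, b, c) * u1 (a', b, c) ≤
        ∑ b : Fin 3, ∑ c : Fin 2, ρk k (a, b, c) * u1 (a, b, c)) ∧
    (∀ k b, 0 < marg2 ρ b → ∀ b',
      ∑ a : Fin 3, ∑ c : Fin 2, ρk k (a, b, c) * u2 (a, b', c) ≤
        ∑ a : Fin 3, ∑ c : Fin 2, ρk k (a, b, c) * u2 (a, b, c)) ∧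
    (∀ k c, 0 < marg3 ρ c → ∀ c',
      ∑ a : Fin 3, ∑ b : Fin 3, ρk k (a, b, c) * u3 (a, b, c') ≤
        ∑ a : Fin 3, ∑ b : Fin 3, ρk k (a, b, c) * u3 (a, b, c))


noncomputable def myD1 : Prof → ℝ := fun p => if p = (1,1,1) then 1 else 0
noncomputable def myD2 : Prof → ℝ := fun p => if p = (2,2,1) then 1 else 0
noncomputable def myW1 : Prof → ℝ := fun p => if p = (1,1,0) then 3 else if p = (2,1,0) then 7 else 1
noncomputable def myW2 : Prof → ℝ := fun p => if p = (2,2,0) then 3 else if p = (1,2,0) then 7 else 1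
noncomputable def myE (k : ℕ) : ℝ := 1 / (k + 2)

lemma myE_pos (k : ℕ) : 0 < myE k := by
  have : (0:ℝ) < (k:ℝ) + 2 := by positivity
  exact div_pos one_pos this

lemma myE_lt_one (k : ℕ) : myE k < 1 := by
  rw [myE, div_lt_one (by positivity)]
  have : (0:ℝ) ≤ (k:ℝ) := Nat.cast_nonneg k
  linarith

lemma myE_tendsto : Filter.Tendsto myE Filter.atTop (nhds 0) := by
  have h : Filter.Tendsto (fun k : ℕ => ((k:ℝ) + 2)) Filter.atTop Filter.atTop :=
    Filter.tendsto_atTop_add_const_right _ 2 tendsto_natCast_atTop_atTop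
  exact h.inv_tendsto_atTop.congr (fun k => by simp [myE, one_div, Pi.inv_apply])

lemma myW1_ge (p : Prof) : (1:ℝ) ≤ myW1 p := by
  rw [myW1]; split_ifs <;> norm_num

lemma myW2_ge (p : Prof) : (1:ℝ) ≤ myW2 p := by
  rw [myW2]; split_ifs <;> norm_num

lemma myD1_nonneg (p : Prof) : (0:ℝ) ≤ myD1 p := by
  rw [myD1]; split_ifs <;> norm_num

lemma myD2_nonneg (p : Prof) : (0:ℝ) ≤ myD2 p := by
  rw [myD2]; split_ifs <;> norm_num

lemma myD1_sum : ∑ p : Prof, myD1 p = 1 := by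
  simp only [Fintype.sum_prod_type, Fin.sum_univ_three, Fin.sum_univ_two, myD1]
  norm_num [Prod.ext_iff, Fin.ext_iff]

lemma myD2_sum : ∑ p : Prof, myD2 p = 1 := by
  simp only [Fintype.sum_prod_type, Fin.sum_univ_three, Fin.sum_univ_two, myD2]
  norm_num [Prod.ext_iff, Fin.ext_iff]

lemma myW1_sum : ∑ p : Prof, myW1 p = 26 := by
  simp only [Fintype.sum_prod_type, Fin.sum_univ_three, Fin.sum_univ_two, myW1]
  norm_num [Prod.ext_iff, Fin.ext_iff]

lemma myW2_sum : ∑ p : Prof, myW2 p = 26 := by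
  simp only [Fintype.sum_prod_type, Fin.sum_univ_three, Fin.sum_univ_two, myW2]
  norm_num [Prod.ext_iff, Fin.ext_iff]

lemma myCPE1 : IsCPE3 myD1 := by
  refine ⟨⟨myD1_nonneg, myD1_sum⟩,
    fun k p => (1 - myE k) * myD1 p + (myE k / 26) * myW1 p, ?_, ?_, ?_, ?_, ?_⟩
  · intro k
    have he := myE_pos k
    have he1 := myE_lt_one k
    have hmix : Mixed3 fun p => (1 - myE k) * myD1 p + (myE k / 26) * myW1 p := by
      intro p
      have h1 : 0 ≤ (1 - myE k) * myD1 p :=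
        mul_nonneg (by linarith) (myD1_nonneg p)
      have h2 : 0 < (myE k / 26) * myW1 p :=
        mul_pos (by positivity) (lt_of_lt_of_le one_pos (myW1_ge p))
      simpa using by linarith
    refine ⟨⟨fun p => le_of_lt (hmix p), ?_⟩, hmix⟩
    rw [Finset.sum_add_distrib, ← Finset.mul_sum, ← Finset.mul_sum, myD1_sum, myW1_sum]
    ring
  · intro p
    have h0 : Filter.Tendsto (fun k : ℕ => (1:ℝ) - myE k) Filter.atTop (nhds (1 - 0)) :=
      tendsto_const_nhds.sub myE_tendsto
    have := (h0.mul_const (myD1 p)).add ((myE_tendsto.div_const 26).mul_const (myW1 p))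
    simpa using this
  · intro k a ha a'
    have he := myE_pos k
    have he1 := myE_lt_one k
    fin_cases a
    · exfalso
      norm_num [marg1, myD1, Fin.sum_univ_three, Fin.sum_univ_two, Prod.ext_iff, Fin.ext_iff] at ha
    · fin_cases a' <;>
        (norm_num (config := {decide := true}) [Fin.sum_univ_three, Fin.sum_univ_two, u1, myD1, myW1,
          Prod.ext_iff, Matrix.vecHead, Matrix.vecTail, Matrix.cons_val_two] <;> nlinarith)
    · exfalso
      norm_num [marg1, myD1, Fin.sum_univ_three, Fin.sum_univ_two, Prod.ext_iff, Fin.ext_iff] at ha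
  · intro k b hb b'
    have he := myE_pos k
    have he1 := myE_lt_one k
    fin_cases b
    · exfalso
      norm_num [marg2, myD1, Fin.sum_univ_three, Fin.sum_univ_two, Prod.ext_iff, Fin.ext_iff] at hb
    · fin_cases b' <;>
        (norm_num (config := {decide := true}) [Fin.sum_univ_three, Fin.sum_univ_two, u2, myD1, myW1,
          Prod.ext_iff, Matrix.vecHead, Matrix.vecTail, Matrix.cons_val_two] <;> nlinarith)
    · exfalso
      norm_num [marg2, myD1, Fin.sum_univ_three, Fin.sum_univ_two, Prod.ext_iff, Fin.ext_iff] at hb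
  · intro k c hc c'
    have he := myE_pos k
    have he1 := myE_lt_one k
    fin_cases c
    · exfalso
      norm_num [marg3, myD1, Fin.sum_univ_three, Fin.sum_univ_two, Prod.ext_iff, Fin.ext_iff] at hc
    · fin_cases c' <;>
        (norm_num (config := {decide := true}) [Fin.sum_univ_three, Fin.sum_univ_two, u3, myD1, myW1,
          Prod.ext_iff, Matrix.vecHead, Matrix.vecTail, Matrix.cons_val_two] <;> nlinarith)

lemma myCPE2 : IsCPE3 myD2 := by
  refine ⟨⟨myD2_nonneg, myD2_sum⟩,
    fun k p => (1 - myE k) * myD2 p + (myE k / 26) * myW2 p, ?_, ?_, ?_, ?_, ?_⟩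
  · intro k
    have he := myE_pos k
    have he1 := myE_lt_one k
    have hmix : Mixed3 fun p => (1 - myE k) * myD2 p + (myE k / 26) * myW2 p := by
      intro p
      have h1 : 0 ≤ (1 - myE k) * myD2 p :=
        mul_nonneg (by linarith) (myD2_nonneg p)
      have h2 : 0 < (myE k / 26) * myW2 p :=
        mul_pos (by positivity) (lt_of_lt_of_le one_pos (myW2_ge p))
      simpa using by linarith
    refine ⟨⟨fun p => le_of_lt (hmix p), ?_⟩, hmix⟩
    rw [Finset.sum_add_distrib, ← Finset.mul_sum, ← Finset.mul_sum, myD2_sum, myW2_sum]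
    ring
  · intro p
    have h0 : Filter.Tendsto (fun k : ℕ => (1:ℝ) - myE k) Filter.atTop (nhds (1 - 0)) :=
      tendsto_const_nhds.sub myE_tendsto
    have := (h0.mul_const (myD2 p)).add ((myE_tendsto.div_const 26).mul_const (myW2 p))
    simpa using this
  · intro k a ha a'
    have he := myE_pos k
    have he1 := myE_lt_one k
    fin_cases a
    · exfalso
      norm_num [marg1, myD2, Fin.sum_univ_three, Fin.sum_univ_two, Prod.ext_iff, Fin.ext_iff] at ha
    · exfalso
      norm_num [marg1, myD2, Fin.sum_univ_three, Fin.sum_univ_two, Prod.ext_iff, Fin.ext_iff] at ha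
    · fin_cases a' <;>
        (norm_num (config := {decide := true}) [Fin.sum_univ_three, Fin.sum_univ_two, u1, myD2, myW2,
          Prod.ext_iff, Matrix.vecHead, Matrix.vecTail, Matrix.cons_val_two] <;> nlinarith)
  · intro k b hb b'
    have he := myE_pos k
    have he1 := myE_lt_one k
    fin_cases b
    · exfalso
      norm_num [marg2, myD2, Fin.sum_univ_three, Fin.sum_univ_two, Prod.ext_iff, Fin.ext_iff] at hb
    · exfalso
      norm_num [marg2, myD2, Fin.sum_univ_three, Fin.sum_univ_two, Prod.ext_iff, Fin.ext_iff] at hb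
    · fin_cases b' <;>
        (norm_num (config := {decide := true}) [Fin.sum_univ_three, Fin.sum_univ_two, u2, myD2, myW2,
          Prod.ext_iff, Matrix.vecHead, Matrix.vecTail, Matrix.cons_val_two] <;> nlinarith)
  · intro k c hc c'
    have he := myE_pos k
    have he1 := myE_lt_one k
    fin_cases c
    · exfalso
      norm_num [marg3, myD2, Fin.sum_univ_three, Fin.sum_univ_two, Prod.ext_iff, Fin.ext_iff] at hc
    · fin_cases c' <;>
        (norm_num (config := {decide := true}) [Fin.sum_univ_three, Fin.sum_univ_two, u3, myD2, myW2,
          Prod.ext_iff, Matrix.vecHead, Matrix.vecTail, Matrix.cons_val_two] <;> nlinarith)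

lemma myKey (l : ℝ) (hl0 : 0 < l) (hl1 : l < 1) :
    ¬ IsCPE3 (fun p => l * (if p = (1, 1, 1) then 1 else 0)
      + (1 - l) * (if p = (2, 2, 1) then 1 else 0)) := by
  rintro ⟨hdist, ρk, hk, htend, h1, h2, h3⟩
  have hpos := (hk 0).2
  have hm1 : 0 < marg1 (fun p : Prof => l * (if p = (1,1,1) then 1 else 0)
      + (1-l) * (if p = (2,2,1) then 1 else 0)) 1 := by
    norm_num [marg1, Fin.sum_univ_three, Fin.sum_univ_two, Prod.ext_iff, Fin.ext_iff]
    try linarith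
  have hm2 : 0 < marg1 (fun p : Prof => l * (if p = (1,1,1) then 1 else 0)
      + (1-l) * (if p = (2,2,1) then 1 else 0)) 2 := by
    norm_num [marg1, Fin.sum_univ_three, Fin.sum_univ_two, Prod.ext_iff, Fin.ext_iff]
    try linarith
  have hn1 : 0 < marg2 (fun p : Prof => l * (if p = (1,1,1) then 1 else 0)
      + (1-l) * (if p = (2,2,1) then 1 else 0)) 1 := by
    norm_num [marg2, Fin.sum_univ_three, Fin.sum_univ_two, Prod.ext_iff, Fin.ext_iff]
    try linarith
  have hn2 : 0 < marg2 (fun p : Prof => l * (if p = (1,1,1) then 1 else 0)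
      + (1-l) * (if p = (2,2,1) then 1 else 0)) 2 := by
    norm_num [marg2, Fin.sum_univ_three, Fin.sum_univ_two, Prod.ext_iff, Fin.ext_iff]
    try linarith
  have E1 := h1 0 1 hm1 0
  have E2 := h1 0 2 hm2 0
  have F1 := h2 0 1 hn1 0
  have F2 := h2 0 2 hn2 0
  have P1 := hpos (1,0,0)
  have P2 := hpos (1,1,0)
  have P3 := hpos (1,2,0)
  have P4 := hpos (2,0,0)
  have P5 := hpos (2,1,0)
  have P6 := hpos (2,2,0)
  have P7 := hpos (0,1,0)
  have P8 := hpos (0,2,0)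
  norm_num [Fin.sum_univ_three, Fin.sum_univ_two, u1, u2, Prod.ext_iff, Fin.ext_iff,
    Matrix.vecHead, Matrix.vecTail, Matrix.cons_val_two] at E1 E2 F1 F2 P1 P2 P3 P4 P5 P6 P7 P8
  linarith


/-- No strict convex combination of `δ_{(y₁,y₂,y₃)}` and `δ_{(z₁,z₂,y₃)}` is correlated
perfect; hence the set of correlated perfect equilibria of Myerson's game is not convex. -/
theorem myerson_mixture_not_cpe :
    (∀ l : ℝ, 0 < l → l < 1 →
      ¬ IsCPE3 (fun p => l * (if p = (1, 1, 1) then 1 else 0)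
        + (1 - l) * (if p = (2, 2, 1) then 1 else 0))) ∧
    ¬ Convex ℝ {ρ : Prof → ℝ | IsCPE3 ρ} := by
  refine ⟨fun l h0 h1 => myKey l h0 h1, ?_⟩
  intro hconv
  have hmem := hconv (Set.mem_setOf.mpr myCPE1) (Set.mem_setOf.mpr myCPE2)
    (by norm_num : (0:ℝ) ≤ 1/2) (by norm_num : (0:ℝ) ≤ 1/2) (by norm_num)
  apply myKey (1/2) (by norm_num) (by norm_num)
  have heq : ((1/2:ℝ) • myD1 + (1/2:ℝ) • myD2) =
      (fun p : Prof => (1/2:ℝ) * (if p = (1,1,1) then 1 else 0)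
        + (1 - 1/2) * (if p = (2,2,1) then 1 else 0)) := by
    funext p
    simp [myD1, myD2]
    norm_num
  rw [← heq]
  exact hmem
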